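/- Define on X⁺ = ℤ₊^{ℤ₊} the function b(x) = (1/ζ(3+α))·Σ_{k=1}^∞ k^{-(3+α)}/(1+x_{k-1}) for a fixed α > 0, and the g-function g(i,x) = p_i·b(x) for i ≥ 1 and g(0,x) = 1 - b(x), where p_i > 0 and Σ p_i = 1. Then (svar_n √g)² ≤ √(var_n b) = O(n^{-(1+α/2)}), hence Σ_n (svar_n √g)² < ∞. -/
import Mathlib

open MeasureTheory Filter

/-- The one-sided shift on `ℕ^{ℤ₊}`. -/
def shiftN (x : ℕ → ℕ) : ℕ → ℕ := fun n => x (n + 1)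

/-- Prepending a symbol. -/
def consN (σ : ℕ) (x : ℕ → ℕ) : ℕ → ℕ :=
  fun n => match n with | 0 => σ | k + 1 => x k

/-- `var_n f (x)` (valued in `ℝ≥0∞`). -/
noncomputable def evarN (n : ℕ) (f : (ℕ → ℕ) → ℝ) (x : ℕ → ℕ) : ENNReal :=
  ⨆ y ∈ {y : ℕ → ℕ | ∀ i ≤ n, y i = x i}, ENNReal.ofReal |f x - f y|

/-- `var_n f = sup_x var_n f (x)`. -/
noncomputable def VarN (n : ℕ) (f : (ℕ → ℕ) → ℝ) : ENNReal :=
  ⨆ x : ℕ → ℕ, evarN n f x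

/-- `(svar_n f)² = sup_x Σ_σ (var_{n+1} f (σ,x))²`. -/
noncomputable def svarsqN (n : ℕ) (f : (ℕ → ℕ) → ℝ) : ENNReal :=
  ⨆ x : ℕ → ℕ, ∑' σ : ℕ, (evarN (n + 1) f (consN σ x)) ^ 2

/-- `b(x) = ζ(3+α)⁻¹ Σ_{k≥1} k^{-(3+α)}/(1+x_{k-1})`. -/
noncomputable def bfun (α : ℝ) (x : ℕ → ℕ) : ℝ :=
  (∑' k : ℕ, ((k : ℝ) + 1) ^ (-(3 + α)))⁻¹ *
    ∑' k : ℕ, ((k : ℝ) + 1) ^ (-(3 + α)) * (1 + (x k : ℝ))⁻¹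

/-- The `g`-function `g(i,x) = pᵢ·b(x)` for `i ≥ 1`, `g(0,x) = 1 - b(x)`, viewed as
a function of the sequence `y = (i, x₀, x₁, …)`. -/
noncomputable def Gfun (α : ℝ) (p : ℕ → ℝ) (y : ℕ → ℕ) : ℝ :=
  if y 0 = 0 then 1 - bfun α (shiftN y) else p (y 0) * bfun α (shiftN y)

/-! ### Auxiliary real-analysis lemmas -/

lemma sqrt_diff_le {a b : ℝ} (ha : 0 ≤ a) (hb : 0 ≤ b) :
    |Real.sqrt a - Real.sqrt b| ≤ Real.sqrt |a - b| := by
  wlog hab : b ≤ a generalizing a b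
  · rw [abs_sub_comm, abs_sub_comm a b]; exact this hb ha (le_of_not_ge hab)
  have h1 : Real.sqrt b ≤ Real.sqrt a := Real.sqrt_le_sqrt hab
  have key : (Real.sqrt a - Real.sqrt b) ^ 2 ≤ a - b := by
    have h2 : Real.sqrt b * Real.sqrt b ≤ Real.sqrt a * Real.sqrt b :=
      mul_le_mul_of_nonneg_right h1 (Real.sqrt_nonneg b)
    have e1 : Real.sqrt a * Real.sqrt a = a := Real.mul_self_sqrt ha
    have e2 : Real.sqrt b * Real.sqrt b = b := Real.mul_self_sqrt hb
    nlinarith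
  calc |Real.sqrt a - Real.sqrt b| ≤ Real.sqrt (a - b) := Real.abs_le_sqrt key
    _ = Real.sqrt |a - b| := by rw [abs_of_nonneg (sub_nonneg.2 hab)]

lemma teleSum {a : ℕ → ℝ} (hmono : ∀ n, a (n + 1) ≤ a n)
    (h0 : Tendsto a atTop (nhds 0)) :
    HasSum (fun n => a n - a (n + 1)) (a 0) := by
  rw [hasSum_iff_tendsto_nat_of_nonneg (fun n => sub_nonneg.2 (hmono n))]
  have h : ∀ N : ℕ, ∑ i ∈ Finset.range N, (a i - a (i + 1)) = a 0 - a N :=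
    fun N => Finset.sum_range_sub' a N
  simpa [h] using tendsto_const_nhds.sub h0

lemma summable_rpow_aux {c : ℝ} (hc : c < -1) :
    Summable (fun k : ℕ => ((k : ℝ) + 1) ^ c) := by
  have h := (Real.summable_nat_rpow (p := c)).2 hc
  exact ((summable_nat_add_iff 1).2 h).congr (fun n => by push_cast; rfl)

noncomputable def zetaA (α : ℝ) : ℝ := ∑' k : ℕ, ((k : ℝ) + 1) ^ (-(3 + α))
noncomputable def tailA (α : ℝ) (n : ℕ) : ℝ := ∑' j : ℕ, ((j : ℝ) + (n : ℝ) + 2) ^ (-(3 + α))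

variable {α : ℝ}

lemma summable_zetaA (hα : 0 < α) : Summable (fun k : ℕ => ((k : ℝ) + 1) ^ (-(3 + α))) :=
  summable_rpow_aux (by linarith)

lemma summable_tailA (hα : 0 < α) (n : ℕ) :
    Summable (fun j : ℕ => ((j : ℝ) + (n : ℝ) + 2) ^ (-(3 + α))) := by
  refine Summable.of_nonneg_of_le (fun j => Real.rpow_nonneg (by positivity) _)
    (fun j => Real.rpow_le_rpow_of_nonpos (by positivity)
      (by push_cast; linarith [Nat.cast_nonneg (α := ℝ) n]) (by linarith)) (summable_zetaA hα)

lemma one_le_zetaA (hα : 0 < α) : 1 ≤ zetaA α := by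
  have h := Summable.le_tsum (summable_zetaA hα) 0 (fun j _ => Real.rpow_nonneg (by positivity) _)
  rw [zetaA]
  simpa [Real.one_rpow] using h

lemma zetaA_pos (hα : 0 < α) : 0 < zetaA α := lt_of_lt_of_le one_pos (one_le_zetaA hα)

lemma tailA_le_quarter (hα : 0 < α) (n : ℕ) : tailA α n ≤ 1 / 4 := by
  set a : ℕ → ℝ := fun j => 1 / (2 * ((j : ℝ) + 1) * ((j : ℝ) + 2)) with ha
  have hmono : ∀ j, a (j + 1) ≤ a j := by
    intro j
    apply one_div_le_one_div_of_le (by positivity)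
    push_cast; nlinarith [Nat.cast_nonneg (α := ℝ) j]
  have h0 : Tendsto a atTop (nhds 0) := by
    apply squeeze_zero (fun j => by positivity) (g := fun j : ℕ => 1 / ((j : ℝ) + 1))
    · intro j
      apply one_div_le_one_div_of_le (by positivity)
      nlinarith [Nat.cast_nonneg (α := ℝ) j]
    · exact tendsto_one_div_add_atTop_nhds_zero_nat
  have hs : HasSum (fun j => a j - a (j + 1)) (a 0) := teleSum hmono h0
  have hterm : ∀ j : ℕ, ((j : ℝ) + (n : ℝ) + 2) ^ (-(3 + α)) ≤ a j - a (j + 1) := by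
    intro j
    have hj : (0:ℝ) ≤ (j:ℝ) := Nat.cast_nonneg j
    have hn : (0:ℝ) ≤ (n:ℝ) := Nat.cast_nonneg n
    have step1 : ((j : ℝ) + (n : ℝ) + 2) ^ (-(3 + α)) ≤ ((j : ℝ) + 2) ^ (-(3 + α)) :=
      Real.rpow_le_rpow_of_nonpos (by linarith) (by linarith) (by linarith)
    have step2 : ((j : ℝ) + 2) ^ (-(3 + α)) ≤ ((j : ℝ) + 2) ^ (-3 : ℝ) :=
      Real.rpow_le_rpow_of_exponent_le (by linarith) (by linarith)
    have step3 : ((j : ℝ) + 2) ^ (-3 : ℝ) = (((j : ℝ) + 2) ^ (3 : ℕ))⁻¹ := by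
      rw [show (-3 : ℝ) = -((3 : ℕ) : ℝ) by norm_num, Real.rpow_neg (by linarith),
        Real.rpow_natCast]
    have step4 : (((j : ℝ) + 2) ^ (3 : ℕ))⁻¹ ≤ a j - a (j + 1) := by
      have hval : a j - a (j + 1) = 1 / (((j:ℝ) + 1) * ((j:ℝ) + 2) * ((j:ℝ) + 3)) := by
        rw [ha]; push_cast
        rw [div_sub_div _ _ (by positivity) (by positivity),
          div_eq_div_iff (by positivity) (by positivity)]
        ring
      rw [hval, one_div]
      apply inv_anti₀ (by positivity)
      nlinarith
    calc ((j : ℝ) + (n : ℝ) + 2) ^ (-(3 + α)) ≤ ((j : ℝ) + 2) ^ (-3 : ℝ) := step1.trans step2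
      _ = (((j : ℝ) + 2) ^ (3 : ℕ))⁻¹ := step3
      _ ≤ a j - a (j + 1) := step4
  have := Summable.tsum_le_tsum hterm (summable_tailA hα n) hs.summable
  rw [hs.tsum_eq] at this
  refine this.trans ?_
  rw [ha]; norm_num

lemma tailA_bound (hα : 0 < α) (n : ℕ) : tailA α n ≤ ((n : ℝ) + 1) ^ (-(2 + α)) := by
  set a : ℕ → ℝ := fun j => 1 / ((j : ℝ) + (n : ℝ) + 1) with ha
  have hn : (0:ℝ) ≤ (n:ℝ) := Nat.cast_nonneg n
  have hmono : ∀ j, a (j + 1) ≤ a j := by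
    intro j
    apply one_div_le_one_div_of_le (by positivity)
    push_cast; linarith
  have h0 : Tendsto a atTop (nhds 0) := by
    apply squeeze_zero (fun j => by positivity) (g := fun j : ℕ => 1 / ((j : ℝ) + 1))
    · intro j
      apply one_div_le_one_div_of_le (by positivity)
      linarith
    · exact tendsto_one_div_add_atTop_nhds_zero_nat
  have hs : HasSum (fun j => a j - a (j + 1)) (a 0) := teleSum hmono h0
  have hs2 : HasSum (fun j => ((n : ℝ) + 1) ^ (-(1 + α)) * (a j - a (j + 1)))
      (((n : ℝ) + 1) ^ (-(1 + α)) * a 0) := hs.mul_left _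
  have hterm : ∀ j : ℕ, ((j : ℝ) + (n : ℝ) + 2) ^ (-(3 + α)) ≤
      ((n : ℝ) + 1) ^ (-(1 + α)) * (a j - a (j + 1)) := by
    intro j
    have hj : (0:ℝ) ≤ (j:ℝ) := Nat.cast_nonneg j
    have hpos : (0:ℝ) < (j : ℝ) + (n : ℝ) + 2 := by linarith
    have hsplit : ((j : ℝ) + (n : ℝ) + 2) ^ (-(3 + α)) =
        ((j : ℝ) + (n : ℝ) + 2) ^ (-(1 + α)) * ((j : ℝ) + (n : ℝ) + 2) ^ (-2 : ℝ) := by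
      rw [← Real.rpow_add hpos]; ring_nf
    have h1 : ((j : ℝ) + (n : ℝ) + 2) ^ (-(1 + α)) ≤ ((n : ℝ) + 1) ^ (-(1 + α)) :=
      Real.rpow_le_rpow_of_nonpos (by linarith) (by linarith) (by linarith)
    have h2 : ((j : ℝ) + (n : ℝ) + 2) ^ (-2 : ℝ) ≤ a j - a (j + 1) := by
      have hval : a j - a (j + 1) = 1 / (((j:ℝ) + (n:ℝ) + 1) * ((j:ℝ) + (n:ℝ) + 2)) := by
        rw [ha]; push_cast
        rw [div_sub_div _ _ (by positivity) (by positivity),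
          div_eq_div_iff (by positivity) (by positivity)]
        ring
      have h3 : ((j : ℝ) + (n : ℝ) + 2) ^ (-2 : ℝ) = (((j : ℝ) + (n : ℝ) + 2) ^ (2 : ℕ))⁻¹ := by
        rw [show (-2 : ℝ) = -((2 : ℕ) : ℝ) by norm_num, Real.rpow_neg hpos.le, Real.rpow_natCast]
      rw [hval, h3, one_div]
      apply inv_anti₀ (by positivity)
      nlinarith
    calc ((j : ℝ) + (n : ℝ) + 2) ^ (-(3 + α))
        = ((j : ℝ) + (n : ℝ) + 2) ^ (-(1 + α)) * ((j : ℝ) + (n : ℝ) + 2) ^ (-2 : ℝ) := hsplit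
      _ ≤ ((n : ℝ) + 1) ^ (-(1 + α)) * (a j - a (j + 1)) := by
          apply mul_le_mul h1 h2 (Real.rpow_nonneg hpos.le _) (Real.rpow_nonneg (by linarith) _)
  have hle := Summable.tsum_le_tsum hterm (summable_tailA hα n) hs2.summable
  rw [hs2.tsum_eq] at hle
  refine hle.trans ?_
  have ha0 : a 0 = ((n : ℝ) + 1) ^ (-1 : ℝ) := by
    rw [ha, Real.rpow_neg_one]; push_cast; ring_nf
  rw [ha0, ← Real.rpow_add (by linarith)]
  rw [show -(1 + α) + -1 = -(2 + α) by ring]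

lemma inv_term_mem (m : ℕ) : 0 ≤ (1 + (m : ℝ))⁻¹ ∧ (1 + (m : ℝ))⁻¹ ≤ 1 := by
  constructor
  · positivity
  · rw [inv_le_one_iff₀]; right; linarith [Nat.cast_nonneg (α := ℝ) m]

lemma summable_bseries (hα : 0 < α) (x : ℕ → ℕ) :
    Summable (fun k : ℕ => ((k : ℝ) + 1) ^ (-(3 + α)) * (1 + (x k : ℝ))⁻¹) := by
  refine Summable.of_nonneg_of_le (fun k => by positivity) (fun k => ?_) (summable_zetaA hα)
  exact mul_le_of_le_one_right (Real.rpow_nonneg (by positivity) _) (inv_term_mem (x k)).2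

lemma bfun_nonneg (hα : 0 < α) (x : ℕ → ℕ) : 0 ≤ bfun α x := by
  apply mul_nonneg
  · exact inv_nonneg.2 (zetaA_pos hα).le
  · exact tsum_nonneg (fun k => by positivity)

lemma bfun_le_one (hα : 0 < α) (x : ℕ → ℕ) : bfun α x ≤ 1 := by
  have hS : (∑' k : ℕ, ((k : ℝ) + 1) ^ (-(3 + α)) * (1 + (x k : ℝ))⁻¹) ≤ zetaA α := by
    refine Summable.tsum_le_tsum (fun k => ?_) (summable_bseries hα x) (summable_zetaA hα)
    exact mul_le_of_le_one_right (Real.rpow_nonneg (by positivity) _) (inv_term_mem (x k)).2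
  calc bfun α x ≤ (zetaA α)⁻¹ * zetaA α :=
        mul_le_mul_of_nonneg_left hS (inv_nonneg.2 (zetaA_pos hα).le)
    _ = 1 := inv_mul_cancel₀ (zetaA_pos hα).ne'

lemma bfun_diff (hα : 0 < α) (n : ℕ) (x y : ℕ → ℕ) (h : ∀ i ≤ n, y i = x i) :
    |bfun α x - bfun α y| ≤ tailA α n := by
  set t : ℕ → ℝ := fun k => ((k : ℝ) + 1) ^ (-(3 + α)) with ht
  have htnn : ∀ k, 0 ≤ t k := fun k => Real.rpow_nonneg (by positivity) _
  have hx := summable_bseries hα x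
  have hy := summable_bseries hα y
  set u : ℕ → ℝ := fun k => t k * (1 + (x k : ℝ))⁻¹ - t k * (1 + (y k : ℝ))⁻¹ with hu
  have hus : Summable u := hx.sub hy
  set v : ℕ → ℝ := fun k => if k ≤ n then 0 else t k with hv
  have hvnn : ∀ k, 0 ≤ v k := fun k => by rw [hv]; dsimp only; split <;> simp [htnn]
  have hvs : Summable v := by
    refine Summable.of_nonneg_of_le hvnn (fun k => ?_) (summable_zetaA hα)
    rw [hv]; dsimp only; split
    · exact htnn k
    · exact le_refl _
  have husv : ∀ k, |u k| ≤ v k := by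
    intro k
    rw [hu, hv]; dsimp only
    split
    · rename_i hk
      rw [h k hk]; simp
    · rw [← mul_sub, abs_mul, abs_of_nonneg (htnn k)]
      refine mul_le_of_le_one_right (htnn k) ?_
      have h1 := inv_term_mem (x k)
      have h2 := inv_term_mem (y k)
      rw [abs_le]; constructor <;> linarith
  have habs : |∑' k, u k| ≤ ∑' k, v k := by
    rw [abs_le]; constructor
    · rw [neg_le, ← tsum_neg]
      refine Summable.tsum_le_tsum (fun k => ?_) hus.neg hvs
      have := (abs_le.1 (husv k)).1; linarith
    · exact Summable.tsum_le_tsum (fun k => le_trans (le_abs_self _) (husv k)) hus hvs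
  have hvsum : ∑' k, v k = tailA α n := by
    have := (Summable.sum_add_tsum_nat_add (f := v) (n + 1) hvs).symm
    have hz : ∑ i ∈ Finset.range (n + 1), v i = 0 := by
      apply Finset.sum_eq_zero
      intro i hi
      rw [hv]; dsimp only
      rw [if_pos (Nat.lt_succ_iff.1 (Finset.mem_range.1 hi))]
    rw [this, hz, zero_add]
    unfold tailA
    congr 1
    funext j
    rw [hv]; dsimp only
    rw [if_neg (by omega)]
    rw [ht]; push_cast; ring_nf
  have hdiff : bfun α x - bfun α y = (zetaA α)⁻¹ * ∑' k, u k := by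
    unfold bfun
    rw [← mul_sub]
    congr 1
    exact (Summable.tsum_sub hx hy).symm
  rw [hdiff, abs_mul, abs_of_nonneg (inv_nonneg.2 (zetaA_pos hα).le)]
  calc (zetaA α)⁻¹ * |∑' k, u k| ≤ 1 * tailA α n := by
        apply mul_le_mul _ (habs.trans hvsum.le) (abs_nonneg _) zero_le_one
        rw [inv_le_one_iff₀]; right; exact one_le_zetaA hα
    _ = tailA α n := one_mul _

lemma sq_rpow_half (a : ENNReal) : (a ^ (1 / 2 : ℝ)) ^ (2 : ℕ) = a := by
  rw [← ENNReal.rpow_natCast (a ^ (1 / 2 : ℝ)) 2, ← ENNReal.rpow_mul]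
  norm_num

/-- For the example `g(i,x) = pᵢ b(x)`, `g(0,x) = 1-b(x)`:
`(svar_n √g)² ≤ √(var_n b) = O(n^{-(1+α/2)})`, hence `Σ_n (svar_n √g)² < ∞`. -/
theorem stmt17 (α : ℝ) (hα : 0 < α) (p : ℕ → ℝ)
    (hp : ∀ i, 1 ≤ i → 0 < p i) (hp1 : HasSum (fun i : ℕ => p (i + 1)) 1) :
    (∀ n : ℕ, svarsqN n (fun y => Real.sqrt (Gfun α p y)) ≤
        (VarN n (bfun α)) ^ (1 / 2 : ℝ)) ∧
      (∃ C : ENNReal, C < ⊤ ∧ ∀ n : ℕ, 1 ≤ n →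
        (VarN n (bfun α)) ^ (1 / 2 : ℝ) ≤
          C * ENNReal.ofReal ((n : ℝ) ^ (-(1 + α / 2)))) ∧
      ∑' n : ℕ, svarsqN n (fun y => Real.sqrt (Gfun α p y)) < ⊤ := by
  set q : ℕ → ℝ := fun σ => if σ = 0 then 1 else p σ with hq
  have hqnn : ∀ σ, 0 ≤ q σ := by
    intro σ
    rw [hq]; dsimp only; split
    · exact zero_le_one
    · exact (hp σ (by omega)).le
  -- bound VarN by the tail
  have hVtail : ∀ n, VarN n (bfun α) ≤ ENNReal.ofReal (tailA α n) := by
    intro n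
    refine iSup_le fun x => iSup₂_le fun y hy => ?_
    exact ENNReal.ofReal_le_ofReal (bfun_diff hα n x y hy)
  have hVq : ∀ n, VarN n (bfun α) ≤ ENNReal.ofReal (1 / 4) :=
    fun n => (hVtail n).trans (ENNReal.ofReal_le_ofReal (tailA_le_quarter hα n))
  -- the sum of the weights q equals 2
  have hQsum : ∑' σ : ℕ, ENNReal.ofReal (q σ) = 2 := by
    rw [tsum_eq_zero_add' ENNReal.summable]
    have h0 : ENNReal.ofReal (q 0) = 1 := by rw [hq]; norm_num
    have h1 : ∑' i : ℕ, ENNReal.ofReal (q (i + 1)) = 1 := by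
      have he : ∀ i : ℕ, ENNReal.ofReal (q (i + 1)) = ENNReal.ofReal (p (i + 1)) := by
        intro i; rw [hq]; norm_num
      rw [tsum_congr he, ← ENNReal.ofReal_tsum_of_nonneg
        (fun i => (hp (i + 1) (by omega)).le) hp1.summable, hp1.tsum_eq, ENNReal.ofReal_one]
    rw [h0, h1]
    norm_num
  -- single-σ bound on the variation of √g
  have hEvar : ∀ n (x : ℕ → ℕ) (σ : ℕ),
      evarN (n + 1) (fun y => Real.sqrt (Gfun α p y)) (consN σ x) ≤
        (ENNReal.ofReal (q σ)) ^ (1 / 2 : ℝ) * (VarN n (bfun α)) ^ (1 / 2 : ℝ) := by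
    intro n x σ
    refine iSup₂_le fun y' hy' => ?_
    have hy0 : y' 0 = σ := hy' 0 (Nat.zero_le _)
    set x' := shiftN y' with hx'def
    have hx' : x' ∈ {y : ℕ → ℕ | ∀ i ≤ n, y i = x i} :=
      fun i hi => hy' (i + 1) (Nat.succ_le_succ hi)
    have hshift : shiftN (consN σ x) = x := funext fun k => rfl
    have hGc : Gfun α p (consN σ x) = if σ = 0 then 1 - bfun α x else p σ * bfun α x := by
      simp only [Gfun, hshift]
      rfl
    have hGy : Gfun α p y' = if σ = 0 then 1 - bfun α x' else p σ * bfun α x' := by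
      simp only [Gfun, hy0, hx'def]
    have hb1 := bfun_nonneg hα x
    have hb2 := bfun_le_one hα x
    have hb3 := bfun_nonneg hα x'
    have hb4 := bfun_le_one hα x'
    have hreal : |Real.sqrt (Gfun α p (consN σ x)) - Real.sqrt (Gfun α p y')| ≤
        Real.sqrt (q σ) * Real.sqrt |bfun α x - bfun α x'| := by
      rw [hGc, hGy, hq]
      by_cases h0 : σ = 0
      · simp only [if_pos h0]
        calc |Real.sqrt (1 - bfun α x) - Real.sqrt (1 - bfun α x')|
            ≤ Real.sqrt |(1 - bfun α x) - (1 - bfun α x')| :=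
              sqrt_diff_le (by linarith) (by linarith)
          _ = Real.sqrt |bfun α x - bfun α x'| := by
              rw [show (1 - bfun α x) - (1 - bfun α x') = -(bfun α x - bfun α x') by ring,
                abs_neg]
          _ = Real.sqrt 1 * Real.sqrt |bfun α x - bfun α x'| := by
              rw [Real.sqrt_one, one_mul]
      · simp only [if_neg h0]
        have hpσ : 0 ≤ p σ := (hp σ (by omega)).le
        rw [Real.sqrt_mul hpσ, Real.sqrt_mul hpσ, ← mul_sub, abs_mul,
          abs_of_nonneg (Real.sqrt_nonneg _)]
        exact mul_le_mul_of_nonneg_left (sqrt_diff_le hb1 hb3) (Real.sqrt_nonneg _)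
    have hΔV : ENNReal.ofReal |bfun α x - bfun α x'| ≤ VarN n (bfun α) := by
      have h1 : ENNReal.ofReal |bfun α x - bfun α x'| ≤ evarN n (bfun α) x :=
        le_iSup₂ (f := fun (y : ℕ → ℕ) (_ : y ∈ {y : ℕ → ℕ | ∀ i ≤ n, y i = x i}) =>
          ENNReal.ofReal |bfun α x - bfun α y|) x' hx'
      exact h1.trans (le_iSup (fun x => evarN n (bfun α) x) x)
    calc ENNReal.ofReal |Real.sqrt (Gfun α p (consN σ x)) - Real.sqrt (Gfun α p y')|
        ≤ ENNReal.ofReal (Real.sqrt (q σ) * Real.sqrt |bfun α x - bfun α x'|) :=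
          ENNReal.ofReal_le_ofReal hreal
      _ = ENNReal.ofReal (Real.sqrt (q σ)) * ENNReal.ofReal (Real.sqrt |bfun α x - bfun α x'|) :=
          ENNReal.ofReal_mul (Real.sqrt_nonneg _)
      _ = (ENNReal.ofReal (q σ)) ^ (1 / 2 : ℝ) *
            (ENNReal.ofReal |bfun α x - bfun α x'|) ^ (1 / 2 : ℝ) := by
          rw [Real.sqrt_eq_rpow, Real.sqrt_eq_rpow,
            ENNReal.ofReal_rpow_of_nonneg (hqnn σ) (by norm_num),
            ENNReal.ofReal_rpow_of_nonneg (abs_nonneg _) (by norm_num)]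
      _ ≤ (ENNReal.ofReal (q σ)) ^ (1 / 2 : ℝ) * (VarN n (bfun α)) ^ (1 / 2 : ℝ) :=
          mul_le_mul_right (ENNReal.rpow_le_rpow hΔV (by norm_num)) _
  -- svarsq ≤ 2 V
  have hsvar : ∀ n, svarsqN n (fun y => Real.sqrt (Gfun α p y)) ≤ 2 * VarN n (bfun α) := by
    intro n
    refine iSup_le fun x => ?_
    calc ∑' σ : ℕ, (evarN (n + 1) (fun y => Real.sqrt (Gfun α p y)) (consN σ x)) ^ 2
        ≤ ∑' σ : ℕ, ENNReal.ofReal (q σ) * VarN n (bfun α) := by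
          refine ENNReal.tsum_le_tsum fun σ => ?_
          calc (evarN (n + 1) (fun y => Real.sqrt (Gfun α p y)) (consN σ x)) ^ 2
              ≤ ((ENNReal.ofReal (q σ)) ^ (1 / 2 : ℝ) * (VarN n (bfun α)) ^ (1 / 2 : ℝ)) ^ 2 :=
                pow_le_pow_left' (hEvar n x σ) 2
            _ = ENNReal.ofReal (q σ) * VarN n (bfun α) := by
                rw [mul_pow, sq_rpow_half, sq_rpow_half]
      _ = (∑' σ : ℕ, ENNReal.ofReal (q σ)) * VarN n (bfun α) := ENNReal.tsum_mul_right
      _ = 2 * VarN n (bfun α) := by rw [hQsum]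
  -- 2V ≤ V^{1/2}
  have h2V : ∀ n, 2 * VarN n (bfun α) ≤ (VarN n (bfun α)) ^ (1 / 2 : ℝ) := by
    intro n
    set V := VarN n (bfun α) with hV
    have hhalf : V ^ (1 / 2 : ℝ) ≤ ENNReal.ofReal (1 / 2) := by
      have h := ENNReal.rpow_le_rpow (hVq n) (by norm_num : (0:ℝ) ≤ 1 / 2)
      rwa [ENNReal.ofReal_rpow_of_nonneg (by norm_num) (by norm_num),
        show ((1:ℝ) / 4) ^ ((1:ℝ) / 2) = 1 / 2 by
          rw [show (1/4 : ℝ) = (1/2) ^ (2:ℕ) by norm_num, ← Real.rpow_natCast,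
            ← Real.rpow_mul (by norm_num)]
          norm_num] at h
    have hVV : V = V ^ (1 / 2 : ℝ) * V ^ (1 / 2 : ℝ) := by
      rw [← ENNReal.rpow_add_of_nonneg (1/2) (1/2) (by norm_num) (by norm_num)]
      norm_num
    have hofhalf : ENNReal.ofReal (1 / 2) = 2⁻¹ := by
      rw [one_div, ENNReal.ofReal_inv_of_pos (by norm_num)]
      norm_num
    calc 2 * V = 2 * (V ^ (1 / 2 : ℝ) * V ^ (1 / 2 : ℝ)) := by rw [← hVV]
      _ ≤ 2 * (2⁻¹ * V ^ (1 / 2 : ℝ)) := by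
          refine mul_le_mul_right (mul_le_mul_left ?_ _) 2
          rw [← hofhalf]; exact hhalf
      _ = (2 * 2⁻¹) * V ^ (1 / 2 : ℝ) := by rw [mul_assoc]
      _ = V ^ (1 / 2 : ℝ) := by
          rw [ENNReal.mul_inv_cancel (by norm_num) (by norm_num), one_mul]
  have part1 : ∀ n : ℕ, svarsqN n (fun y => Real.sqrt (Gfun α p y)) ≤
      (VarN n (bfun α)) ^ (1 / 2 : ℝ) := fun n => (hsvar n).trans (h2V n)
  -- V^{1/2} ≤ (n+1)^{-(1+α/2)}
  have hVpow : ∀ n : ℕ, (VarN n (bfun α)) ^ (1 / 2 : ℝ) ≤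
      ENNReal.ofReal (((n : ℝ) + 1) ^ (-(1 + α / 2))) := by
    intro n
    have h1 : VarN n (bfun α) ≤ ENNReal.ofReal (((n : ℝ) + 1) ^ (-(2 + α))) :=
      (hVtail n).trans (ENNReal.ofReal_le_ofReal (tailA_bound hα n))
    have h2 := ENNReal.rpow_le_rpow h1 (by norm_num : (0:ℝ) ≤ 1 / 2)
    rwa [ENNReal.ofReal_rpow_of_nonneg (Real.rpow_nonneg (by positivity) _) (by norm_num),
      ← Real.rpow_mul (by positivity),
      show -(2 + α) * (1 / 2) = -(1 + α / 2) by ring] at h2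
  refine ⟨part1, ⟨1, ENNReal.one_lt_top, fun n hn => ?_⟩, ?_⟩
  · rw [one_mul]
    refine (hVpow n).trans (ENNReal.ofReal_le_ofReal ?_)
    refine Real.rpow_le_rpow_of_nonpos ?_ (by linarith) ?_
    · exact_mod_cast Nat.lt_of_lt_of_le Nat.zero_lt_one hn
    · linarith
  · have hsum : Summable (fun n : ℕ => ((n : ℝ) + 1) ^ (-(1 + α / 2))) :=
      summable_rpow_aux (by linarith)
    calc ∑' n : ℕ, svarsqN n (fun y => Real.sqrt (Gfun α p y))
        ≤ ∑' n : ℕ, ENNReal.ofReal (((n : ℝ) + 1) ^ (-(1 + α / 2))) :=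
          ENNReal.tsum_le_tsum fun n => (part1 n).trans (hVpow n)
      _ = ENNReal.ofReal (∑' n : ℕ, ((n : ℝ) + 1) ^ (-(1 + α / 2))) :=
          (ENNReal.ofReal_tsum_of_nonneg (fun n => Real.rpow_nonneg (by positivity) _) hsum).symm
      _ < ⊤ := ENNReal.ofReal_lt_top
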